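/- For all integers m, n ≥ 1, the Legendre logarithmic functions satisfy the weighted orthogonality relation ∫₀¹ L_m(x) L_n(x) / ( ((1+x)/4) · (log₂((1+x)/4))² ) dx = δ_{mn} · ln 2/(2n−1). -/

import Mathlib

open Polynomial MeasureTheory Real Filter

/-- The Legendre polynomial of degree `n`, via the Rodrigues formula
`P_n(x) = 1/(2^n n!) dⁿ/dxⁿ (x² - 1)ⁿ`. -/
noncomputable def legendre (n : ℕ) : Polynomial ℝ :=
  (1 / (2 ^ n * n.factorial) : ℝ) • derivative^[n] ((X ^ 2 - 1) ^ n)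

/-- The shifted Legendre polynomial `P̃_n(x) = P_n(2x - 1)` on `[0,1]`. -/
noncomputable def shiftedLegendre (n : ℕ) (x : ℝ) : ℝ :=
  (legendre n).eval (2 * x - 1)

/-- The altered Legendre polynomial `A_n(x) = ((x+1)/2) P̃_{n-1}(x)` for `n ≥ 1`. -/
noncomputable def alteredLegendre (n : ℕ) (x : ℝ) : ℝ :=
  ((x + 1) / 2) * shiftedLegendre (n - 1) x

/-- The Legendre logarithmic function `L_n(x) = (-1)^{n-1} A_n(1 - log₂(1+x))`. -/
noncomputable def legendreLog (n : ℕ) (x : ℝ) : ℝ :=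
  (-1) ^ (n - 1) * alteredLegendre n (1 - Real.logb 2 (1 + x))

open intervalIntegral

lemma poly_intervalIntegrable (p : Polynomial ℝ) (a b : ℝ) :
    IntervalIntegrable (fun x => p.eval x) volume a b :=
  (p.continuous_aeval).intervalIntegrable a b

lemma poly_integral_deriv (p : Polynomial ℝ) (a b : ℝ) :
    ∫ x in a..b, (derivative p).eval x = p.eval b - p.eval a := by
  rw [← intervalIntegral.integral_deriv_eq_sub (f := fun x => p.eval x)
    (fun x _ => p.differentiable_aeval x)]
  · simp [Polynomial.deriv]
  · have : (deriv fun x => p.eval x) = fun x => (derivative p).eval x := by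
      funext x; exact Polynomial.deriv p
    rw [this]; exact poly_intervalIntegrable (derivative p) a b

lemma poly_ibp (p q : Polynomial ℝ) (a b : ℝ) :
    ∫ x in a..b, (derivative p).eval x * q.eval x
      = p.eval b * q.eval b - p.eval a * q.eval a
        - ∫ x in a..b, p.eval x * (derivative q).eval x := by
  have h := poly_integral_deriv (p * q) a b
  rw [derivative_mul] at h
  have hsplit : ∫ x in a..b, ((derivative p * q).eval x + (p * derivative q).eval x)
      = (∫ x in a..b, (derivative p * q).eval x) + ∫ x in a..b, (p * derivative q).eval x :=
    intervalIntegral.integral_add (poly_intervalIntegrable _ a b) (poly_intervalIntegrable _ a b)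
  simp only [eval_add, eval_mul] at h hsplit ⊢
  rw [hsplit] at h
  linarith

lemma factor_iterate_deriv (n j : ℕ) (hj : j ≤ n) :
    ∃ r : Polynomial ℝ, derivative^[j] ((X ^ 2 - 1) ^ n) = (X ^ 2 - 1) ^ (n - j) * r := by
  induction j with
  | zero => exact ⟨1, by simp⟩
  | succ j ih =>
    obtain ⟨r, hr⟩ := ih (le_of_lt (Nat.lt_of_succ_le hj))
    refine ⟨C ((n : ℝ) - j) * derivative (X ^ 2 - 1) * r + (X ^ 2 - 1) * derivative r, ?_⟩
    rw [Function.iterate_succ_apply', hr, derivative_mul, derivative_pow]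
    have h1 : n - j = (n - (j + 1)) + 1 := by omega
    rw [h1]
    have h2 : ((n - (j + 1) + 1 : ℕ) : ℝ) = (n : ℝ) - j := by
      rw [Nat.cast_add, Nat.cast_sub hj]; push_cast; ring
    rw [h2]
    have h3 : (n - (j+1)) + 1 - 1 = n - (j+1) := by omega
    rw [h3, pow_succ]
    ring

lemma eval_iterate_deriv_boundary (n j : ℕ) (hj : j < n) (x : ℝ) (hx : x ^ 2 = 1) :
    (derivative^[j] ((X ^ 2 - 1) ^ n : Polynomial ℝ)).eval x = 0 := by
  obtain ⟨r, hr⟩ := factor_iterate_deriv n j (le_of_lt hj)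
  rw [hr, eval_mul, eval_pow, eval_sub, eval_pow, eval_one, eval_X, hx, sub_self,
    zero_pow (by omega), zero_mul]

lemma ibp_iter (n : ℕ) (q : Polynomial ℝ) (k : ℕ) (hk : k ≤ n) :
    ∫ x in (-1:ℝ)..1, (derivative^[n] ((X ^ 2 - 1) ^ n : Polynomial ℝ)).eval x * q.eval x
      = (-1:ℝ) ^ k * ∫ x in (-1:ℝ)..1,
          (derivative^[n - k] ((X ^ 2 - 1) ^ n : Polynomial ℝ)).eval x
            * (derivative^[k] q).eval x := by
  induction k with
  | zero => simp
  | succ k ih =>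
    rw [ih (le_of_lt (Nat.lt_of_succ_le hk))]
    have h1 : n - k = (n - (k + 1)) + 1 := by omega
    have h2 : derivative^[n - k] ((X ^ 2 - 1) ^ n : Polynomial ℝ)
        = derivative (derivative^[n - (k+1)] ((X ^ 2 - 1) ^ n)) := by
      rw [h1, Function.iterate_succ_apply']
    rw [h2, poly_ibp,
      eval_iterate_deriv_boundary n _ (by omega) 1 (by norm_num),
      eval_iterate_deriv_boundary n _ (by omega) (-1) (by norm_num)]
    rw [← Function.iterate_succ_apply' derivative k q]
    ring

noncomputable def Jint (n : ℕ) : ℝ := ∫ x in (-1:ℝ)..1, (((X:Polynomial ℝ) ^ 2 - 1) ^ n).eval x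

lemma Jint_zero : Jint 0 = 2 := by simp [Jint]; norm_num

lemma Jint_rec (k : ℕ) :
    ((2:ℝ) * k + 3) * Jint (k + 1) = -((2:ℝ) * k + 2) * Jint k := by
  have hpoly : derivative ((X : Polynomial ℝ) * ((X ^ 2 - 1) ^ (k + 1)))
      = C ((2:ℝ) * k + 3) * ((X ^ 2 - 1) ^ (k + 1)) + C ((2:ℝ) * k + 2) * ((X ^ 2 - 1) ^ k) := by
    apply Polynomial.funext; intro x
    simp only [derivative_mul, derivative_X, derivative_pow, derivative_sub, derivative_one,
      derivative_X_pow, eval_add, eval_mul, eval_sub, eval_pow, eval_one, eval_X, eval_C,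
      eval_natCast, one_mul, Nat.add_sub_cancel, sub_zero]
    push_cast
    ring
  have hFTC := poly_integral_deriv ((X : Polynomial ℝ) * ((X ^ 2 - 1) ^ (k + 1))) (-1) 1
  rw [hpoly] at hFTC
  have hsplit : ∫ x in (-1:ℝ)..1,
      ((C ((2:ℝ) * k + 3) * ((X ^ 2 - 1) ^ (k + 1))
        + C ((2:ℝ) * k + 2) * ((X ^ 2 - 1) ^ k) : Polynomial ℝ)).eval x
      = ((2:ℝ) * k + 3) * Jint (k + 1) + ((2:ℝ) * k + 2) * Jint k := by
    simp only [eval_add, eval_mul, eval_C]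
    rw [intervalIntegral.integral_add ((poly_intervalIntegrable _ _ _).const_mul _)
      ((poly_intervalIntegrable _ _ _).const_mul _),
      intervalIntegral.integral_const_mul, intervalIntegral.integral_const_mul]
    rfl
  rw [hsplit] at hFTC
  simp only [eval_mul, eval_X, eval_pow, eval_sub, eval_one] at hFTC
  norm_num at hFTC
  linarith

lemma Jint_formula (n : ℕ) :
    Jint n = (-1) ^ n * 2 ^ (2 * n + 1) * (n.factorial : ℝ) ^ 2 / ((2 * n + 1).factorial : ℝ) := by
  induction n with
  | zero => simp [Jint_zero]
  | succ k ih =>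
    have hrec := Jint_rec k
    have h3 : ((2:ℝ) * k + 3) ≠ 0 := by positivity
    have hJ : Jint (k + 1) = -((2:ℝ) * k + 2) * Jint k / (2 * k + 3) := by
      field_simp at hrec ⊢; linarith
    rw [hJ, ih]
    have hfac : ((2 * (k + 1) + 1).factorial : ℝ)
        = ((2 * k + 3 : ℕ) : ℝ) * ((2 * k + 2 : ℕ) : ℝ) * ((2 * k + 1).factorial : ℝ) := by
      have : 2 * (k + 1) + 1 = (2 * k + 2) + 1 := by ring
      rw [this, Nat.factorial_succ, Nat.factorial_succ]
      push_cast; ring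
    have hf1 : ((2 * k + 1).factorial : ℝ) ≠ 0 := Nat.cast_ne_zero.mpr (Nat.factorial_ne_zero _)
    have hfk : ((k.factorial : ℝ)) ≠ 0 := Nat.cast_ne_zero.mpr (Nat.factorial_ne_zero _)
    have hks : (((k+1).factorial : ℕ) : ℝ) = ((k:ℝ)+1) * (k.factorial : ℝ) := by
      rw [Nat.factorial_succ]; push_cast; ring
    rw [hfac, hks]
    push_cast
    field_simp
    ring


lemma monic_core (n : ℕ) : (((X:Polynomial ℝ) ^ 2 - 1) ^ n).Monic := by
  have h : ((X:Polynomial ℝ) ^ 2 - 1) = X ^ 2 - C 1 := by rw [map_one]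
  rw [h]
  exact (monic_X_pow_sub_C (1:ℝ) two_ne_zero).pow n

lemma natDegree_core (n : ℕ) : (((X:Polynomial ℝ) ^ 2 - 1) ^ n).natDegree = 2 * n := by
  have h : ((X:Polynomial ℝ) ^ 2 - 1) = X ^ 2 - C 1 := by rw [map_one]
  rw [h, natDegree_pow, natDegree_X_pow_sub_C, mul_comm]

lemma iterate_2n (n : ℕ) :
    derivative^[n] (derivative^[n] (((X:Polynomial ℝ) ^ 2 - 1) ^ n))
      = C (((2 * n).factorial : ℕ) : ℝ) := by
  rw [← Function.iterate_add_apply]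
  have hnn : n + n = 2 * n := by omega
  rw [hnn]
  have hdeg : (derivative^[2 * n] (((X:Polynomial ℝ) ^ 2 - 1) ^ n)).natDegree ≤ 0 := by
    refine le_trans (natDegree_iterate_derivative _ _) ?_
    rw [natDegree_core]; omega
  rw [Polynomial.eq_C_of_natDegree_le_zero hdeg, coeff_iterate_derivative]
  have h2n : 0 + 2 * n = 2 * n := by omega
  rw [h2n, Nat.descFactorial_self]
  have hc : (((X:Polynomial ℝ) ^ 2 - 1) ^ n).coeff (2*n) = 1 := by
    have := (monic_core n).coeff_natDegree
    rwa [natDegree_core] at this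
  rw [hc]
  simp

lemma legendre_orth_le (m n : ℕ) (hmn : m ≤ n) :
    ∫ x in (-1:ℝ)..1, (legendre m).eval x * (legendre n).eval x
      = if m = n then 2 / (2 * (n:ℝ) + 1) else 0 := by
  have hsmul : ∀ (k : ℕ) (x : ℝ), (legendre k).eval x
      = (1 / (2 ^ k * k.factorial) : ℝ) * (derivative^[k] (((X:Polynomial ℝ) ^ 2 - 1) ^ k)).eval x := by
    intro k x; rw [legendre, eval_smul, smul_eq_mul]
  have hmain : ∫ x in (-1:ℝ)..1,
      (derivative^[n] (((X:Polynomial ℝ) ^ 2 - 1) ^ n)).eval x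
        * (derivative^[m] (((X:Polynomial ℝ) ^ 2 - 1) ^ m)).eval x
      = (-1:ℝ) ^ n * ∫ x in (-1:ℝ)..1,
          ((((X:Polynomial ℝ) ^ 2 - 1) ^ n)).eval x
            * (derivative^[n] (derivative^[m] (((X:Polynomial ℝ) ^ 2 - 1) ^ m))).eval x := by
    have := ibp_iter n (derivative^[m] (((X:Polynomial ℝ) ^ 2 - 1) ^ m)) n le_rfl
    simpa using this
  by_cases h : m = n
  · subst h
    rw [if_pos rfl]
    have hconv : ∀ x : ℝ, (legendre m).eval x * (legendre m).eval x
        = (1 / (2 ^ m * m.factorial) : ℝ)^2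
          * ((derivative^[m] (((X:Polynomial ℝ) ^ 2 - 1) ^ m)).eval x
            * (derivative^[m] (((X:Polynomial ℝ) ^ 2 - 1) ^ m)).eval x) := by
      intro x; rw [hsmul]; ring
    rw [intervalIntegral.integral_congr (fun x _ => hconv x),
      intervalIntegral.integral_const_mul, hmain, iterate_2n]
    have : ∫ x in (-1:ℝ)..1, ((((X:Polynomial ℝ) ^ 2 - 1) ^ m)).eval x
        * (C (((2 * m).factorial : ℕ) : ℝ)).eval x
        = (((2 * m).factorial : ℕ) : ℝ) * Jint m := by
      simp only [eval_C]
      rw [show ∀ g : ℝ → ℝ, (∫ x in (-1:ℝ)..1, g x * (((2 * m).factorial : ℕ) : ℝ))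
          = (((2 * m).factorial : ℕ) : ℝ) * ∫ x in (-1:ℝ)..1, g x from fun g => by
        rw [← intervalIntegral.integral_const_mul]; congr 1; funext x; ring]
      rfl
    rw [this, Jint_formula]
    have hfac21 : ((2 * m + 1).factorial : ℝ) = ((2*m+1 : ℕ) : ℝ) * ((2 * m).factorial : ℝ) := by
      rw [Nat.factorial_succ]; push_cast; ring
    have h1 : ((2 * m).factorial : ℝ) ≠ 0 := Nat.cast_ne_zero.mpr (Nat.factorial_ne_zero _)
    have h2 : ((m.factorial : ℝ)) ≠ 0 := Nat.cast_ne_zero.mpr (Nat.factorial_ne_zero _)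
    have h3 : ((2:ℝ) * m + 1) ≠ 0 := by positivity
    have h4 : (2:ℝ) ^ m ≠ 0 := by positivity
    rw [hfac21]
    push_cast
    field_simp
    ring_nf
    rw [show ((-1:ℝ))^(m*2) = 1 by rw [mul_comm, pow_mul]; norm_num]
    ring
  · rw [if_neg h]
    have hlt : m < n := lt_of_le_of_ne hmn h
    have hzero : derivative^[n] (derivative^[m] (((X:Polynomial ℝ) ^ 2 - 1) ^ m)) = 0 := by
      rw [← Function.iterate_add_apply]
      apply iterate_derivative_eq_zero
      rw [natDegree_core]; omega
    have hconv : ∀ x : ℝ, (legendre m).eval x * (legendre n).eval x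
        = ((1 / (2 ^ m * m.factorial) : ℝ) * (1 / (2 ^ n * n.factorial) : ℝ))
          * ((derivative^[n] (((X:Polynomial ℝ) ^ 2 - 1) ^ n)).eval x
            * (derivative^[m] (((X:Polynomial ℝ) ^ 2 - 1) ^ m)).eval x) := by
      intro x; rw [hsmul, hsmul]; ring
    rw [intervalIntegral.integral_congr (fun x _ => hconv x),
      intervalIntegral.integral_const_mul, hmain, hzero]
    simp

lemma legendre_orth (m n : ℕ) :
    ∫ x in (-1:ℝ)..1, (legendre m).eval x * (legendre n).eval x
      = if m = n then 2 / (2 * (n:ℝ) + 1) else 0 := by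
  rcases le_total m n with h | h
  · exact legendre_orth_le m n h
  · have := legendre_orth_le n m h
    rw [intervalIntegral.integral_congr
      (fun x _ => mul_comm ((legendre m).eval x) ((legendre n).eval x)), this]
    by_cases hmn : m = n
    · subst hmn; simp
    · rw [if_neg (fun hh => hmn hh.symm), if_neg hmn]


lemma shifted_orth (j k : ℕ) :
    ∫ x in (0:ℝ)..1, shiftedLegendre j x * shiftedLegendre k x
      = if j = k then 1 / (2 * (k:ℝ) + 1) else 0 := by
  have h : ∀ x : ℝ, shiftedLegendre j x * shiftedLegendre k x
      = (fun y => (legendre j).eval y * (legendre k).eval y) (2 * x + (-1)) := by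
    intro x; simp [_root_.shiftedLegendre, sub_eq_add_neg]
  rw [intervalIntegral.integral_congr (fun x _ => h x),
    intervalIntegral.integral_comp_mul_add
      (fun y => (legendre j).eval y * (legendre k).eval y) two_ne_zero (-1)]
  norm_num [legendre_orth j k]
  by_cases hjk : j = k
  · rw [if_pos hjk, if_pos hjk]; field_simp
  · rw [if_neg hjk, if_neg hjk]



lemma shiftedLegendre_continuous (k : ℕ) : Continuous (shiftedLegendre k) := by
  unfold _root_.shiftedLegendre
  exact (legendre k).continuous_aeval.comp (by continuity)

/-- Weighted orthogonality of the Legendre logarithmic functions: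
`∫₀¹ L_m(x) L_n(x) / (((1+x)/4) log₂²((1+x)/4)) dx = δ_{mn} ln 2/(2n-1)`. -/
theorem legendreLog_orthogonality (m n : ℕ) (hm : 1 ≤ m) (hn : 1 ≤ n) :
    ∫ x in (0:ℝ)..1,
        legendreLog m x * legendreLog n x /
          (((1 + x) / 4) * (Real.logb 2 ((1 + x) / 4)) ^ 2) =
      (if m = n then 1 else 0) * Real.log 2 / (2 * (n : ℝ) - 1) := by
  set F : ℝ → ℝ := fun x => legendreLog m x * legendreLog n x /
      (((1 + x) / 4) * (Real.logb 2 ((1 + x) / 4)) ^ 2) with hF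
  set g : ℝ → ℝ := fun u => (2:ℝ) ^ (1 - u) - 1 with hg
  set g' : ℝ → ℝ := fun u => (2:ℝ) ^ (1 - u) * Real.log 2 * (-1) with hg'
  have two_pos' : (0:ℝ) < 2 := by norm_num
  have hder : ∀ u : ℝ, HasDerivAt g (g' u) u := by
    intro u
    have h1 : HasDerivAt (fun x : ℝ => 1 - x) (-1) u := by
      simpa using (hasDerivAt_id u).const_sub 1
    have h2 := (Real.hasStrictDerivAt_const_rpow two_pos' (1 - u)).hasDerivAt
    have h3 := h2.comp u h1
    simpa [hg, hg'] using h3.sub_const 1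
  have hg'cont : Continuous g' :=
    ((continuous_const.rpow (continuous_const.sub continuous_id)
      (fun _ => Or.inl two_ne_zero)).mul continuous_const).mul continuous_const
  -- image of [0,1] under g lands in [0,1]
  have himg : ∀ u ∈ Set.uIcc (0:ℝ) 1, g u ∈ Set.Icc (0:ℝ) 1 := by
    intro u hu
    rw [Set.uIcc_of_le (by norm_num : (0:ℝ) ≤ 1)] at hu
    obtain ⟨hu0, hu1⟩ := hu
    constructor
    · have : (1:ℝ) ≤ (2:ℝ) ^ (1 - u) := by
        calc (1:ℝ) = (2:ℝ) ^ (0:ℝ) := (Real.rpow_zero 2).symm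
        _ ≤ (2:ℝ) ^ (1 - u) := Real.rpow_le_rpow_of_exponent_le (by norm_num) (by linarith)
      simp only [hg]; linarith
    · have : (2:ℝ) ^ (1 - u) ≤ (2:ℝ) ^ (1:ℝ) :=
        Real.rpow_le_rpow_of_exponent_le (by norm_num) (by linarith)
      rw [Real.rpow_one] at this
      simp only [hg]; linarith
  -- continuity of F on [0,1]
  have hFcont : ContinuousOn F (Set.Icc (0:ℝ) 1) := by
    have hlog2 : Real.log 2 ≠ 0 := (Real.log_pos (by norm_num)).ne'
    have hL : ∀ k : ℕ, ContinuousOn (legendreLog k) (Set.Icc (0:ℝ) 1) := by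
      intro k
      have harg : ContinuousOn (fun x : ℝ => 1 - Real.logb 2 (1 + x)) (Set.Icc (0:ℝ) 1) := by
        apply continuousOn_const.sub
        unfold Real.logb
        apply ContinuousOn.div_const
        exact ContinuousOn.log (by fun_prop) (fun x hx => by
          have := hx.1; intro h; linarith [h])
      have hA : Continuous (fun t : ℝ => alteredLegendre k t) := by
        unfold alteredLegendre
        exact (by continuity : Continuous fun t : ℝ => (t + 1)/2).mul
          (shiftedLegendre_continuous (k-1))
      unfold legendreLog
      exact continuousOn_const.mul (hA.comp_continuousOn harg)
    apply ContinuousOn.div ((hL m).mul (hL n))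
    · apply ContinuousOn.mul (by fun_prop)
      apply ContinuousOn.pow
      unfold Real.logb
      apply ContinuousOn.div_const
      exact ContinuousOn.log (by fun_prop) (fun x hx => by
        have := hx.1; intro h; linarith [h])
    · intro x hx
      obtain ⟨hx0, hx1⟩ := hx
      have h14 : (0:ℝ) < (1 + x)/4 := by linarith
      have : Real.logb 2 ((1 + x)/4) < 0 :=
        Real.logb_neg (by norm_num) h14 (by linarith)
      have h2 : Real.logb 2 ((1 + x)/4) ≠ 0 := this.ne
      positivity
  -- change of variables
  have hsubs : (∫ u in (0:ℝ)..1, g' u • (F ∘ g) u) = ∫ x in (g 0)..(g 1), F x :=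
    intervalIntegral.integral_comp_smul_deriv' (fun u _ => hder u)
      hg'cont.continuousOn
      (hFcont.mono (by
        intro y hy; obtain ⟨u, hu, rfl⟩ := hy; exact himg u hu))
  have hg0 : g 0 = 1 := by simp [hg]; norm_num
  have hg1 : g 1 = 0 := by simp [hg]
  have h4 : (2:ℝ) ^ (2:ℝ) = 4 := by
    rw [show (2:ℝ) ^ (2:ℝ) = (2:ℝ) ^ ((2:ℕ):ℝ) by norm_num, Real.rpow_natCast]; norm_num
  have hptwise : ∀ u ∈ Set.uIcc (0:ℝ) 1, g' u • (F ∘ g) u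
      = -((((-1:ℝ) ^ (m-1) * (-1:ℝ) ^ (n-1)) * Real.log 2) *
          (shiftedLegendre (m-1) u * shiftedLegendre (n-1) u)) := by
    intro u hu
    rw [Set.uIcc_of_le (by norm_num : (0:ℝ) ≤ 1)] at hu
    obtain ⟨hu0, hu1⟩ := hu
    have htpos : (0:ℝ) < (2:ℝ) ^ (1-u) := Real.rpow_pos_of_pos two_pos' _
    have hx1 : 1 + g u = (2:ℝ) ^ (1-u) := by simp [hg]
    have hlogb1 : Real.logb 2 ((2:ℝ) ^ (1-u)) = 1 - u :=
      Real.logb_rpow (by norm_num) (by norm_num)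
    have hLme : ∀ k : ℕ, legendreLog k (g u)
        = (-1:ℝ) ^ (k-1) * ((u+1)/2 * shiftedLegendre (k-1) u) := by
      intro k
      rw [legendreLog, hx1, hlogb1]
      simp [alteredLegendre]
    have hrel : (2:ℝ) ^ (1-u) = 4 * (2:ℝ) ^ (-1-u) := by
      rw [show (1-u:ℝ) = 2 + (-1-u) by ring, Real.rpow_add two_pos', h4]
    have hden1 : (1 + g u)/4 = (2:ℝ) ^ (-1-u) := by rw [hx1, hrel]; ring
    have hlogb2 : Real.logb 2 ((1 + g u)/4) = -1-u := by
      rw [hden1]; exact Real.logb_rpow (by norm_num) (by norm_num)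
    have h1u : (1:ℝ) + u ≠ 0 := by linarith
    have hneg1u : (-1:ℝ) - u ≠ 0 := by intro h; linarith [h]
    have h2neg : ((2:ℝ) ^ ((-1:ℝ)-u)) ≠ 0 := (Real.rpow_pos_of_pos two_pos' _).ne'
    simp only [Function.comp_apply, smul_eq_mul, hF, hg']
    rw [hLme m, hLme n, hlogb2, hden1, hrel]
    field_simp
    ring
  -- assemble
  have h1 : ∫ x in (g 0)..(g 1), F x = -∫ x in (0:ℝ)..1, F x := by
    rw [hg0, hg1]
    exact intervalIntegral.integral_symm 0 1
  rw [← hsubs, intervalIntegral.integral_congr hptwise] at h1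
  rw [intervalIntegral.integral_neg] at h1
  have h2 : ∫ u in (0:ℝ)..1, (((-1:ℝ) ^ (m-1) * (-1:ℝ) ^ (n-1)) * Real.log 2) *
      (shiftedLegendre (m-1) u * shiftedLegendre (n-1) u)
      = ∫ x in (0:ℝ)..1, F x := neg_injective h1
  have key : ∫ x in (0:ℝ)..1, F x
      = (((-1:ℝ) ^ (m-1) * (-1:ℝ) ^ (n-1)) * Real.log 2) *
        (if m - 1 = n - 1 then 1 / (2 * ((n-1 : ℕ):ℝ) + 1) else 0) := by
    rw [← h2, intervalIntegral.integral_const_mul, shifted_orth]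
  rw [hF] at key
  rw [key]
  by_cases hmn : m = n
  · subst hmn
    rw [if_pos rfl, if_pos rfl]
    have hs : (-1:ℝ) ^ (m-1) * (-1:ℝ) ^ (m-1) = 1 := by
      rw [← pow_add]; exact Even.neg_one_pow ⟨m-1, rfl⟩
    rw [hs]
    have hcast : ((m - 1 : ℕ) : ℝ) = (m:ℝ) - 1 := by
      rw [Nat.cast_sub hm]; norm_num
    rw [hcast]
    have hne : (2 * (m:ℝ) - 1) ≠ 0 := by
      have : (1:ℝ) ≤ (m:ℝ) := by exact_mod_cast hm
      intro h; linarith [h]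
    have : 2 * ((m:ℝ) - 1) + 1 = 2 * (m:ℝ) - 1 := by ring
    rw [this]
    field_simp
  · rw [if_neg (by omega : ¬ m - 1 = n - 1), if_neg hmn]
    simp
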